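/- arXiv:1007.2120 — 2 statements merged into one kernel-verified Lean document; each statement's English description precedes it below -/
import Mathlib

section
/- If X_0, ..., X_k are independent Exponential(1) random variables, then the probability that X_0, ..., X_k form a k-frame is at least 2^{-(k+2)^2}. -/
open MeasureTheory ProbabilityTheory

noncomputable def fr : ℕ → ℝ × ℝ
  | 0 => (1, 3/2)
  | (n+1) => ((fr n).2 / 4, (fr n).1 / 2)

lemma fr_basic : ∀ n, 0 < (fr n).1 ∧ 4*(fr n).1 ≤ 3*(fr n).2 ∧ 2*(fr n).2 ≤ 3*(fr n).1 := by
  intro n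
  induction n with
  | zero => norm_num [fr]
  | succ n ih =>
    obtain ⟨h1, h2, h3⟩ := ih
    refine ⟨?_, ?_, ?_⟩ <;> simp only [fr] <;> nlinarith

lemma fr_a_pos (n : ℕ) : 0 < (fr n).1 := (fr_basic n).1

lemma fr_b_pos (n : ℕ) : 0 < (fr n).2 := by nlinarith [fr_basic n]

lemma fr_a_lt_b (n : ℕ) : (fr n).1 < (fr n).2 := by nlinarith [fr_basic n]

lemma fr_b_succ_le (n : ℕ) : (fr (n+1)).2 ≤ 1/2 := by
  induction n with
  | zero => norm_num [fr]
  | succ n ih =>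
    have h := fr_a_lt_b (n+1)
    show (fr (n+1)).1 / 2 ≤ 1/2
    nlinarith

lemma fr_a_ge (n : ℕ) : ((4:ℝ)^n)⁻¹ ≤ (fr n).1 := by
  induction n with
  | zero => norm_num [fr]
  | succ n ih =>
    have h := fr_basic n
    have h4 : (0:ℝ) < 4^n := by positivity
    show ((4:ℝ)^(n+1))⁻¹ ≤ (fr n).2 / 4
    rw [pow_succ]
    rw [mul_inv]
    have : ((4:ℝ)^n)⁻¹ ≤ (fr n).2 := le_trans ih (le_of_lt (fr_a_lt_b n))
    nlinarith [inv_nonneg.mpr (le_of_lt h4)]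

noncomputable def frF (n : ℕ) : ℝ := Real.exp (-(fr n).1) - Real.exp (-(fr n).2)

lemma exp_half_bounds : (13/8 : ℝ) ≤ Real.exp (1/2) ∧ Real.exp (1/2) ≤ 8/3 := by
  have hs : Real.exp (1/2) * Real.exp (1/2) = Real.exp 1 := by
    rw [← Real.exp_add]; norm_num
  have h1 := Real.exp_one_gt_d9
  have h2 := Real.exp_one_lt_d9
  have hp := Real.exp_pos (1/2 : ℝ)
  constructor <;> nlinarith

lemma frF_ge (n : ℕ) : (fr n).1 / 8 ≤ frF n := by
  obtain ⟨hl, hu⟩ := exp_half_bounds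
  have hp := Real.exp_pos (1/2 : ℝ)
  cases n with
  | zero =>
    show (1:ℝ)/8 ≤ Real.exp (-1) - Real.exp (-(3/2))
    have h1 : Real.exp (-(3/2) : ℝ) = Real.exp (-1) * (Real.exp (1/2))⁻¹ := by
      rw [← Real.exp_neg]
      rw [← Real.exp_add]; norm_num
    have h2 : Real.exp (-1 : ℝ) = (Real.exp 1)⁻¹ := Real.exp_neg 1
    have h3 := Real.exp_one_lt_d9
    have hep := Real.exp_pos (1:ℝ)
    rw [h1, h2]
    have hinv : (Real.exp (1/2 : ℝ))⁻¹ ≤ 8/13 := by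
      rw [inv_le_comm₀ hp (by norm_num)]; linarith
    have hinv2 : (13/40 : ℝ) ≤ (Real.exp 1)⁻¹ := by
      rw [le_inv_comm₀ (by norm_num) hep]; nlinarith
    have hinvpos : (0:ℝ) < (Real.exp 1)⁻¹ := by positivity
    have hinvnn : (0:ℝ) ≤ (Real.exp (1/2 : ℝ))⁻¹ := by positivity
    nlinarith
  | succ n =>
    set a := (fr (n+1)).1 with ha
    set b := (fr (n+1)).2 with hb
    have hbasic := fr_basic (n+1)
    have hble := fr_b_succ_le n
    have hab : a < b := fr_a_lt_b (n+1)
    have hapos : 0 < a := fr_a_pos (n+1)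
    -- exp(-a) - exp(-b) ≥ (b-a) * exp(-b)
    have key : (b - a) * Real.exp (-b) ≤ Real.exp (-a) - Real.exp (-b) := by
      have h1 : Real.exp (-a) = Real.exp (b - a) * Real.exp (-b) := by
        rw [← Real.exp_add]; ring_nf
      have h2 : (b - a) + 1 ≤ Real.exp (b - a) := Real.add_one_le_exp _
      have h3 : 0 < Real.exp (-b) := Real.exp_pos _
      nlinarith
    have hexpb : (3/8 : ℝ) ≤ Real.exp (-b) := by
      have : Real.exp (-(1/2) : ℝ) ≤ Real.exp (-b) := by
        apply Real.exp_le_exp.mpr; linarith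
      have h4 : Real.exp (-(1/2) : ℝ) = (Real.exp (1/2))⁻¹ := Real.exp_neg _
      have : (3/8 : ℝ) ≤ Real.exp (-(1/2) : ℝ) := by
        rw [h4, le_inv_comm₀ (by norm_num) hp]; linarith
      linarith
    have hba : a / 3 ≤ b - a := by
      obtain ⟨_, h2, _⟩ := hbasic; linarith
    have hexpbe : Real.exp (-b) ≤ 1 := Real.exp_le_one_iff.mpr (by linarith)
    show a / 8 ≤ frF (n+1)
    unfold frF
    nlinarith [Real.exp_pos (-b)]

lemma frF_pos (n : ℕ) : 0 < frF n := lt_of_lt_of_le (div_pos (fr_a_pos n) (by norm_num)) (frF_ge n)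

lemma frF_prod (k : ℕ) : ((2:ℝ) ^ ((k + 2) ^ 2))⁻¹ ≤ ∏ i ∈ Finset.range (k+1), frF i := by
  induction k with
  | zero =>
    rw [Finset.prod_range_one]
    have := frF_ge 0
    have : (1:ℝ)/8 ≤ frF 0 := by simpa [fr] using this
    norm_num
    linarith
  | succ k ih =>
    rw [Finset.prod_range_succ]
    have hF : ((4:ℝ)^(k+1))⁻¹ / 8 ≤ frF (k+1) := by
      have h1 := frF_ge (k+1)
      have h2 := fr_a_ge (k+1)
      linarith [h1, (by linarith : ((4:ℝ)^(k+1))⁻¹/8 ≤ (fr (k+1)).1/8)]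
    have hProdNN : (0:ℝ) ≤ ∏ i ∈ Finset.range (k+1), frF i :=
      Finset.prod_nonneg (fun i _ => (frF_pos i).le)
    have heq : ((2:ℝ) ^ ((k + 1 + 2) ^ 2))⁻¹
        = ((2:ℝ) ^ ((k + 2) ^ 2))⁻¹ * (((4:ℝ)^(k+1))⁻¹ / 8) := by
      have h4 : ((4:ℝ)^(k+1)) = 2^(2*(k+1)) := by
        rw [pow_mul]; norm_num
      rw [h4, show (k + 1 + 2)^2 = (k+2)^2 + (2*(k+1) + 3) by ring, pow_add, pow_add]
      rw [mul_inv, mul_inv]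
      norm_num
      ring
    rw [heq]
    have hFpos : (0:ℝ) ≤ ((4:ℝ)^(k+1))⁻¹ / 8 := by positivity
    exact mul_le_mul ih hF hFpos hProdNN

/-- If `X 0, …, X k` are independent Exponential(1) random variables, then the
probability that they form a `k`-frame is at least `2^{-(k+2)²}`. -/
theorem stmt_5 {Ω : Type*} [MeasurableSpace Ω] (μ : Measure Ω) [IsProbabilityMeasure μ]
    (k : ℕ) (X : Fin (k + 1) → Ω → ℝ)
    (hindep : iIndepFun X μ)
    (hX : ∀ i, ∀ x : ℝ, 0 ≤ x → μ {ω | X i ω ≤ x} = ENNReal.ofReal (1 - Real.exp (-x))) :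
    μ {ω | (1 ≤ X 0 ω ∧ X 0 ω ≤ 2) ∧
        ∀ i : Fin (k + 1), ∀ j : Fin (k + 1), (i:ℕ) + 1 = (j:ℕ) →
          X i ω / 4 ≤ X j ω ∧ X j ω ≤ X i ω / 2} ≥
      ENNReal.ofReal (((2:ℝ) ^ ((k + 2) ^ 2))⁻¹) := by
  set S : Fin (k+1) → Set Ω := fun i => X i ⁻¹' Set.Ioc (fr (i:ℕ)).1 (fr (i:ℕ)).2 with hS
  -- intersection is contained in the event
  have hsub : (⋂ i, S i) ⊆ {ω | (1 ≤ X 0 ω ∧ X 0 ω ≤ 2) ∧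
      ∀ i : Fin (k + 1), ∀ j : Fin (k + 1), (i:ℕ) + 1 = (j:ℕ) →
        X i ω / 4 ≤ X j ω ∧ X j ω ≤ X i ω / 2} := by
    intro ω hω
    simp only [Set.mem_iInter] at hω
    have hmem : ∀ i : Fin (k+1), (fr (i:ℕ)).1 < X i ω ∧ X i ω ≤ (fr (i:ℕ)).2 := fun i => hω i
    constructor
    · have h0 := hmem 0
      simp only [Fin.val_zero] at h0
      have : (fr 0).1 = 1 ∧ (fr 0).2 = 3/2 := by norm_num [fr]
      constructor
      · rw [← this.1]; exact h0.1.le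
      · linarith [h0.2]
    · intro i j hij
      have hi := hmem i
      have hj := hmem j
      have hfj : fr (j:ℕ) = ((fr (i:ℕ)).2 / 4, (fr (i:ℕ)).1 / 2) := by
        rw [← hij]; rfl
      rw [hfj] at hj
      simp only at hj
      constructor
      · linarith [hi.2, hj.1]
      · linarith [hi.1, hj.2]
  -- each S i has probability ≥ frF i
  have hEach : ∀ i : Fin (k+1), ENNReal.ofReal (frF (i:ℕ)) ≤ μ (S i) := by
    intro i
    have hapos := fr_a_pos (i:ℕ)
    have hbpos := fr_b_pos (i:ℕ)
    have hsub2 : X i ⁻¹' Set.Iic (fr (i:ℕ)).2 ⊆ S i ∪ X i ⁻¹' Set.Iic (fr (i:ℕ)).1 := by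
      intro ω hω
      by_cases h : (fr (i:ℕ)).1 < X i ω
      · exact Or.inl ⟨h, hω⟩
      · exact Or.inr (le_of_not_gt h)
    have hle : μ (X i ⁻¹' Set.Iic (fr (i:ℕ)).2) ≤ μ (S i) + μ (X i ⁻¹' Set.Iic (fr (i:ℕ)).1) :=
      le_trans (measure_mono hsub2) (measure_union_le _ _)
    have hB : μ (X i ⁻¹' Set.Iic (fr (i:ℕ)).2) = ENNReal.ofReal (1 - Real.exp (-(fr (i:ℕ)).2)) :=
      hX i _ hbpos.le
    have hA : μ (X i ⁻¹' Set.Iic (fr (i:ℕ)).1) = ENNReal.ofReal (1 - Real.exp (-(fr (i:ℕ)).1)) :=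
      hX i _ hapos.le
    rw [hB, hA] at hle
    have hFeq : frF (i:ℕ) = (1 - Real.exp (-(fr (i:ℕ)).2)) - (1 - Real.exp (-(fr (i:ℕ)).1)) := by
      unfold frF; ring
    rw [hFeq, ENNReal.ofReal_sub _ (by
      have := Real.exp_le_one_iff.mpr (by linarith : -(fr (i:ℕ)).1 ≤ 0); linarith)]
    exact tsub_le_iff_right.mpr hle
  -- independence gives the product formula
  have hmeas : ∀ i : Fin (k+1),
      MeasurableSet[(inferInstance : MeasurableSpace ℝ).comap (X i)] (S i) :=
    fun i => ⟨Set.Ioc (fr (i:ℕ)).1 (fr (i:ℕ)).2, measurableSet_Ioc, rfl⟩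
  have hprod : μ (⋂ i, S i) = ∏ i, μ (S i) := hindep.meas_iInter hmeas
  calc ENNReal.ofReal (((2:ℝ) ^ ((k + 2) ^ 2))⁻¹)
      ≤ ENNReal.ofReal (∏ i ∈ Finset.range (k+1), frF i) :=
        ENNReal.ofReal_le_ofReal (frF_prod k)
    _ = ∏ i : Fin (k+1), ENNReal.ofReal (frF (i:ℕ)) := by
        rw [← Fin.prod_univ_eq_prod_range (fun i => frF i) (k+1)]
        exact ENNReal.ofReal_prod_of_nonneg (fun i _ => (frF_pos (i:ℕ)).le)
    _ ≤ ∏ i, μ (S i) := Finset.prod_le_prod' (fun i _ => hEach i)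
    _ = μ (⋂ i, S i) := hprod.symm
    _ ≤ _ := measure_mono hsub
end

section
/- Let X_0, ..., X_k form a k-frame (1 ≤ X_0 ≤ 2 and X_{i-1}/4 ≤ X_i ≤ X_{i-1}/2 for 1 ≤ i ≤ k), and define points x_i = ∑_{j=0}^{i-1} X_j for i = 1, ..., k+1. Then for every i ∈ {1,...,k}, x_{k+1} - x_i ≤ X_{i-1} = x_i - x_{i-1}, i.e., x_{k+1} lies within the broadcast interval of each x_i, so the interference at x_{k+1} is at least k. -/
/-- Let `X 0, …, X k` form a `k`-frame and define the points
`x i = ∑_{j=0}^{i-1} X j`.  Then for every `i ∈ {1,…,k}` we have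
`x (k+1) - x i ≤ X (i-1) = x i - x (i-1)`: the point `x (k+1)` lies within the
broadcast interval of each `x i`, so the interference at `x (k+1)` is at least `k`. -/
theorem stmt_16 (k : ℕ) (X : ℕ → ℝ)
    (h0 : 1 ≤ X 0 ∧ X 0 ≤ 2)
    (hstep : ∀ i : ℕ, 1 ≤ i → i ≤ k → X (i - 1) / 4 ≤ X i ∧ X i ≤ X (i - 1) / 2)
    (x : ℕ → ℝ) (hx : ∀ i, x i = ∑ j ∈ Finset.range i, X j) :
    ∀ i : ℕ, 1 ≤ i → i ≤ k →
      x (k + 1) - x i ≤ X (i - 1) ∧ X (i - 1) = x i - x (i - 1) := by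
  -- positivity of X on {0,…,k}
  have hpos : ∀ i : ℕ, i ≤ k → 0 < X i := by
    intro i
    induction i with
    | zero => intro _; linarith [h0.1]
    | succ n ih =>
      intro hn
      have hn' : n ≤ k := Nat.le_of_succ_le hn
      have h := (hstep (n + 1) (Nat.le_add_left 1 n) hn).1
      simp only [Nat.add_sub_cancel] at h
      have := ih hn'
      linarith
  -- key lemma: tail sum bound, by downward induction
  have key : ∀ m : ℕ, ∀ i : ℕ, i ≤ k → k - i = m →
      (∑ j ∈ Finset.Ico (i + 1) (k + 1), X j) ≤ X i := by
    intro m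
    induction m with
    | zero =>
      intro i hik hm
      have : i = k := by omega
      subst this
      simp only [Finset.Ico_self, Finset.sum_empty]
      exact (hpos _ le_rfl).le
    | succ m ih =>
      intro i hik hm
      have hlt : i < k := by omega
      have hsplit : (∑ j ∈ Finset.Ico (i + 1) (k + 1), X j)
          = X (i + 1) + ∑ j ∈ Finset.Ico (i + 2) (k + 1), X j := by
        rw [Finset.sum_eq_sum_Ico_succ_bot (by omega)]
      have htail := ih (i + 1) (by omega) (by omega)
      have hstep' := (hstep (i + 1) (Nat.le_add_left 1 i) (by omega)).2
      simp only [Nat.add_sub_cancel] at hstep'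
      rw [hsplit]
      linarith
  intro i h1 hik
  obtain ⟨j, rfl⟩ : ∃ j, i = j + 1 := ⟨i - 1, by omega⟩
  simp only [Nat.add_sub_cancel]
  constructor
  · have hdiff : x (k + 1) - x (j + 1) = ∑ m ∈ Finset.Ico (j + 1) (k + 1), X m := by
      rw [hx, hx, Finset.sum_Ico_eq_sub _ (by omega)]
    rw [hdiff]
    exact key (k - j) j (by omega) rfl
  · rw [hx, hx, Finset.sum_range_succ]
    ring
end
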